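/- Let G be a locally compact Hausdorff topological group with left Haar measure μ, let K be a compact normal subgroup of G, and let ν be a left Haar measure on G/K. If X ⊆ G/K is null with respect to ν, then φ_K^{-1}(X) is null with respect to μ, where φ_K: G → G/K is the canonical projection. -/

import Mathlib

open MeasureTheory

/-- If `μ` is a left Haar measure on a locally compact Hausdorff group
`G`, `K` a compact normal subgroup, `ν` a left Haar measure on `G/K`, and `X ⊆ G/K` is
`ν`-null, then `φ_K⁻¹(X)` is `μ`-null. -/
theorem stmt_12 {G : Type*} [Group G] [TopologicalSpace G] [IsTopologicalGroup G]
    [LocallyCompactSpace G] [T2Space G] [MeasurableSpace G] [BorelSpace G]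
    (μ : Measure G) [μ.IsHaarMeasure] [μ.InnerRegular]
    (K : Subgroup G) [K.Normal] (hK : IsCompact (K : Set G))
    [MeasurableSpace (G ⧸ K)] [BorelSpace (G ⧸ K)]
    (ν : Measure (G ⧸ K)) [ν.IsHaarMeasure] [ν.InnerRegular]
    (X : Set (G ⧸ K)) (hX : ν X = 0) :
    μ ((QuotientGroup.mk : G → G ⧸ K) ⁻¹' X) = 0 := by
  haveI : IsClosed (K : Set G) := hK.isClosed
  have hcont : Continuous (QuotientGroup.mk : G → G ⧸ K) := continuous_quot_mk
  have hmeas : Measurable (QuotientGroup.mk : G → G ⧸ K) := hcont.measurable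
  have hsurj : Function.Surjective (QuotientGroup.mk : G → G ⧸ K) :=
    QuotientGroup.mk'_surjective K
  -- the quotient map is proper since `K` is compact
  have hproper : IsProperMap (QuotientGroup.mk : G → G ⧸ K) := by
    rw [isProperMap_iff_isClosedMap_and_compact_fibers]
    refine ⟨hcont, QuotientGroup.isClosedMap_coe hK, fun y => ?_⟩
    obtain ⟨g, rfl⟩ := hsurj y
    have : (QuotientGroup.mk : G → G ⧸ K) ⁻¹' {(g : G ⧸ K)} = (g * ·) '' (K : Set G) := by
      ext x
      simp only [Set.mem_preimage, Set.mem_singleton_iff, Set.mem_image]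
      constructor
      · intro h
        refine ⟨g⁻¹ * x, ?_, by group⟩
        have := (QuotientGroup.eq (s := K) (a := g) (b := x)).1 h.symm
        exact this
      · rintro ⟨k, hk, rfl⟩
        exact ((QuotientGroup.eq (s := K) (a := g) (b := g * k)).2 (by simpa)).symm
    rw [this]
    exact hK.image (continuous_mul_left g)
  set μ' : Measure (G ⧸ K) := μ.map QuotientGroup.mk with hμ'
  haveI : μ'.IsMulLeftInvariant :=
    MeasureTheory.isMulLeftInvariant_map (QuotientGroup.mk' K).toMulHom hmeas hsurj
  haveI : IsFiniteMeasureOnCompacts μ' := by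
    constructor
    intro C hC
    rw [hμ', Measure.map_apply hmeas (hC.isClosed.measurableSet)]
    exact (hproper.isCompact_preimage hC).measure_lt_top
  -- replace X by a measurable null superset
  set Y := toMeasurable ν X with hY
  have hYmeas : MeasurableSet Y := measurableSet_toMeasurable ν X
  have hνY : ν Y = 0 := by rw [hY, measure_toMeasurable]; exact hX
  have hXY : (QuotientGroup.mk : G → G ⧸ K) ⁻¹' X ⊆ QuotientGroup.mk ⁻¹' Y :=
    Set.preimage_mono (subset_toMeasurable ν X)
  refine le_antisymm (le_trans (measure_mono hXY) ?_) (zero_le (a := _))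
  -- inner regularity of μ: enough to bound compacts inside the preimage
  rw [(hmeas hYmeas).measure_eq_iSup_isCompact]
  refine iSup_le fun L => iSup_le fun hL => iSup_le fun hLc => ?_
  have himg : IsCompact (QuotientGroup.mk '' L) := hLc.image hcont
  have hsub : QuotientGroup.mk '' L ⊆ Y := Set.image_subset_iff.2 hL
  have key : μ' (QuotientGroup.mk '' L) = 0 := by
    have := Measure.measure_isMulInvariant_eq_smul_of_isCompact_closure μ' ν
      (s := QuotientGroup.mk '' L) (by rwa [himg.isClosed.closure_eq])
    rw [this]
    have : ν (QuotientGroup.mk '' L) = 0 :=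
      le_antisymm (hνY ▸ measure_mono hsub) (zero_le (a := _))
    simp [this]
  have : μ L ≤ μ' (QuotientGroup.mk '' L) := by
    rw [hμ', Measure.map_apply hmeas himg.isClosed.measurableSet]
    exact measure_mono (Set.subset_preimage_image _ _)
  exact key ▸ this
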